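/- Let T = ∞ and let b ∈ {l, r} be a finite boundary point of the state space with |s(b)| = ∞, where s is the scale function of a regular diffusion satisfying Condition C (s(x) = ∫^x exp(∫^y β) dy with β² locally integrable, accessible finite boundaries absorbing). Then conditions (i.a) '|b| < ∞ and ∫_B |x−b| β(x)² dx < ∞' and (i.b) '|s(b)| = ∞ and the other boundary satisfies (i.a)' are mutually exclusive, i.e., cannot both hold at the same boundary point. -/

import Mathlib

open MeasureTheory Set Filter

open Topology

private lemma aux_left (l r c a : ℝ) (hc : c ∈ Ioo l r) (ha : a ∈ Ioo l r)
    (β : ℝ → ℝ) (hβ : Measurable β)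
    (hloc : LocallyIntegrableOn (fun x => (β x) ^ 2) (Ioo l r) volume)
    (hfin : ∫⁻ x in Ioo l a, ENNReal.ofReal (|x - l| * (β x) ^ 2) < ⊤) :
    ∃ L : ℝ, Tendsto (fun x => ∫ y in c..x, Real.exp (∫ z in c..y, β z))
      (nhdsWithin l (Ioo l a)) (nhds L) := by
  -- β is interval integrable on subintervals of (l, r)
  have hβint : ∀ u ∈ Ioo l r, ∀ v ∈ Ioo l r, IntervalIntegrable β volume u v := by
    intro u hu v hv
    have hsub : uIcc u v ⊆ Ioo l r := Set.ordConnected_Ioo.uIcc_subset hu hv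
    have h2 : IntegrableOn (fun x => β x ^ 2) (uIcc u v) volume :=
      hloc.integrableOn_compact_subset hsub isCompact_uIcc
    have hone : IntegrableOn (fun _ : ℝ => (1:ℝ)) (uIcc u v) volume :=
      integrableOn_const isCompact_uIcc.measure_lt_top.ne
    have h1 : IntegrableOn β (uIcc u v) volume := by
      refine (hone.add h2).mono' hβ.aestronglyMeasurable.restrict (ae_of_all _ fun x => ?_)
      simp only [Real.norm_eq_abs, Pi.add_apply]
      nlinarith [abs_nonneg (β x), sq_abs (β x), sq_nonneg (|β x| - 1)]
    exact h1.intervalIntegrable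
  set P : ℝ → ℝ := fun y => ∫ z in c..y, β z with hPdef
  -- continuity of the primitive
  have hPcont : ContinuousOn P (Ioo l r) := by
    intro y hy
    obtain ⟨hy1, hy2⟩ := hy
    have hmin : min c ((l+y)/2) ∈ Ioo l r :=
      ⟨lt_min hc.1 (by linarith), (min_le_left _ _).trans_lt hc.2⟩
    have hmax : max c ((y+r)/2) ∈ Ioo l r :=
      ⟨hc.1.trans_le (le_max_left _ _), max_lt hc.2 (by linarith)⟩
    have h := intervalIntegral.continuousWithinAt_primitive (μ := volume) (f := β)
        (a := c) (b₀ := y) (b₁ := (l+y)/2) (b₂ := (y+r)/2) (measure_singleton y)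
        (hβint _ hmin _ hmax)
    have hnb : Icc ((l+y)/2) ((y+r)/2) ∈ 𝓝 y := Icc_mem_nhds (by linarith) (by linarith)
    exact (h.continuousAt hnb).continuousWithinAt
  set g : ℝ → ℝ := fun y => Real.exp (P y) with hgdef
  have hgcont : ContinuousOn g (Ioo l r) := Real.continuous_exp.comp_continuousOn hPcont
  -- the midpoint m
  set m : ℝ := (l + min a c)/2 with hmdef
  have hlminac : l < min a c := lt_min ha.1 hc.1
  have hlm : l < m := by rw [hmdef]; linarith
  have hma : m < a := by
    have : min a c ≤ a := min_le_left _ _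
    rw [hmdef]; linarith
  have hmc : m < c := by
    have : min a c ≤ c := min_le_right _ _
    rw [hmdef]; linarith
  have hm : m ∈ Ioo l r := ⟨hlm, hmc.trans hc.2⟩
  -- integrable weight
  have hw : IntegrableOn (fun x => (x - l) * β x ^ 2) (Ioo l a) volume := by
    refine ⟨((measurable_id.sub measurable_const).mul (hβ.pow_const 2)).aestronglyMeasurable.restrict, ?_⟩
    rw [hasFiniteIntegral_iff_ofReal ?nn]
    case nn =>
      filter_upwards [ae_restrict_mem measurableSet_Ioo] with x hx
      exact mul_nonneg (by linarith [hx.1]) (sq_nonneg _)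
    have heq : ∀ᵐ x ∂(volume.restrict (Ioo l a)),
        ENNReal.ofReal ((x - l) * β x ^ 2) = ENNReal.ofReal (|x - l| * β x ^ 2) := by
      filter_upwards [ae_restrict_mem measurableSet_Ioo] with x hx
      rw [abs_of_nonneg (by linarith [hx.1] : (0:ℝ) ≤ x - l)]
    rw [lintegral_congr_ae heq]
    exact hfin
  set C' := ∫ x in Ioo l a, (x - l) * β x ^ 2 with hC'
  have hC0 : 0 ≤ C' := setIntegral_nonneg measurableSet_Ioo
    (fun x hx => mul_nonneg (by linarith [hx.1]) (sq_nonneg _))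
  -- Cauchy–Schwarz bound
  have habs : ∀ y, l < y → y < m →
      (∫ z in Ioc y m, |β z|) ≤ (C' + Real.log ((m - l)/(y - l))) / 2 := by
    intro y hy1 hy2
    set T := Real.log ((m - l)/(y - l)) with hT
    have hT0 : 0 ≤ T := Real.log_nonneg ((one_le_div (by linarith)).2 (by linarith))
    set μ := volume.restrict (Ioc y m) with hμ
    have hsub : Ioc y m ⊆ Ioo l a := fun z hz => ⟨hy1.trans hz.1, lt_of_le_of_lt hz.2 hma⟩
    set f : ℝ → ℝ := fun z => Real.sqrt (z - l) * |β z| with hfdef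
    set G : ℝ → ℝ := fun z => (Real.sqrt (z - l))⁻¹ with hGdef
    have hfm : Measurable f := ((measurable_id.sub measurable_const).sqrt).mul hβ.abs
    have hGm : Measurable G := ((measurable_id.sub measurable_const).sqrt).inv
    have hrpow2 : ∀ x : ℝ, x ^ (2:ℝ) = x ^ 2 := fun x => by
      rw [show (2:ℝ) = ((2:ℕ):ℝ) by norm_num, Real.rpow_natCast]
    have hf2 : Integrable (fun z => f z ^ 2) μ := by
      refine ((hw.mono_set hsub).congr_fun ?_ measurableSet_Ioc)
      intro z hz
      simp only [hfdef, mul_pow, sq_abs, Real.sq_sqrt (by linarith [hz.1] : (0:ℝ) ≤ z - l)]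
    have hGsq : ∀ z ∈ Ioc y m, (z - l)⁻¹ = G z ^ 2 := by
      intro z hz
      rw [hGdef]
      rw [inv_pow, Real.sq_sqrt (by linarith [hz.1] : (0:ℝ) ≤ z - l)]
    have hG2 : Integrable (fun z => G z ^ 2) μ := by
      have hcont : IntegrableOn (fun z : ℝ => (z - l)⁻¹) (Icc y m) volume := by
        apply ContinuousOn.integrableOn_Icc
        refine ContinuousOn.inv₀ (continuousOn_id.sub continuousOn_const) fun z hz => ?_
        have h1 : y ≤ z := hz.1
        show id z - l ≠ 0
        simp only [id]
        intro h
        nlinarith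
      exact (hcont.mono_set Ioc_subset_Icc_self).congr_fun hGsq measurableSet_Ioc
    have hmemf : MemLp f (ENNReal.ofReal 2) μ := by
      rw [show ENNReal.ofReal 2 = 2 by norm_num]
      exact (memLp_two_iff_integrable_sq hfm.aestronglyMeasurable.restrict).2 hf2
    have hmemG : MemLp G (ENNReal.ofReal 2) μ := by
      rw [show ENNReal.ofReal 2 = 2 by norm_num]
      exact (memLp_two_iff_integrable_sq hGm.aestronglyMeasurable.restrict).2 hG2
    have holder := integral_mul_le_Lp_mul_Lq_of_nonneg (μ := μ)
      (Real.HolderConjugate.two_two : Real.HolderConjugate 2 2)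
      (ae_of_all _ fun z => mul_nonneg (Real.sqrt_nonneg _) (abs_nonneg _))
      (ae_of_all _ fun z => inv_nonneg.2 (Real.sqrt_nonneg _)) hmemf hmemG
    have heq1 : (∫ z, f z * G z ∂μ) = ∫ z in Ioc y m, |β z| := by
      refine setIntegral_congr_fun measurableSet_Ioc fun z hz => ?_
      have h0 : (0:ℝ) < Real.sqrt (z - l) := Real.sqrt_pos.2 (by linarith [hz.1])
      simp only [hfdef, hGdef]
      field_simp
    have heq2 : (∫ z, f z ^ (2:ℝ) ∂μ) ≤ C' := by
      simp only [hrpow2]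
      calc (∫ z, f z ^ 2 ∂μ) = ∫ z in Ioc y m, (z - l) * β z ^ 2 := by
            refine setIntegral_congr_fun measurableSet_Ioc fun z hz => ?_
            simp only [hfdef, mul_pow, sq_abs, Real.sq_sqrt (by linarith [hz.1] : (0:ℝ) ≤ z - l)]
        _ ≤ C' := by
            refine setIntegral_mono_set hw ?_ (HasSubset.Subset.eventuallyLE hsub)
            filter_upwards [ae_restrict_mem measurableSet_Ioo] with x hx
            exact mul_nonneg (by linarith [hx.1]) (sq_nonneg _)
    have heq3 : (∫ z, G z ^ (2:ℝ) ∂μ) = T := by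
      simp only [hrpow2]
      have h4 : (∫ z, G z ^ 2 ∂μ) = ∫ z in Ioc y m, (z - l)⁻¹ :=
        (setIntegral_congr_fun measurableSet_Ioc hGsq).symm
      rw [h4, ← intervalIntegral.integral_of_le hy2.le,
        intervalIntegral.integral_comp_sub_right (fun z : ℝ => z⁻¹) l,
        integral_inv_of_pos (by linarith) (by linarith), hT]
    have hint2 : (0:ℝ) ≤ ∫ z, f z ^ (2:ℝ) ∂μ :=
      integral_nonneg fun z => Real.rpow_nonneg (mul_nonneg (Real.sqrt_nonneg _) (abs_nonneg _)) _
    have step : (∫ z, f z ^ (2:ℝ) ∂μ) ^ ((1:ℝ)/2) * (∫ z, G z ^ (2:ℝ) ∂μ) ^ ((1:ℝ)/2)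
        ≤ Real.sqrt C' * Real.sqrt T := by
      rw [heq3, Real.sqrt_eq_rpow, Real.sqrt_eq_rpow]
      exact mul_le_mul_of_nonneg_right (Real.rpow_le_rpow hint2 heq2 (by norm_num))
        (Real.rpow_nonneg hT0 _)
    have amgm : Real.sqrt C' * Real.sqrt T ≤ (C' + T) / 2 := by
      nlinarith [Real.sq_sqrt hC0, Real.sq_sqrt hT0, sq_nonneg (Real.sqrt C' - Real.sqrt T)]
    calc (∫ z in Ioc y m, |β z|) = ∫ z, f z * G z ∂μ := heq1.symm
      _ ≤ _ := holder
      _ ≤ Real.sqrt C' * Real.sqrt T := step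
      _ ≤ (C' + T) / 2 := amgm
  -- pointwise bound on g
  set M : ℝ := Real.exp (|P m| + C'/2) * Real.sqrt (m - l) with hMdef
  have hM0 : 0 ≤ M := mul_nonneg (Real.exp_pos _).le (Real.sqrt_nonneg _)
  have gbound : ∀ y, l < y → y < m → g y ≤ M * (y - l) ^ (-(1/2) : ℝ) := by
    intro y hy1 hy2
    have hyIoo : y ∈ Ioo l r := ⟨hy1, hy2.trans hm.2⟩
    set T := Real.log ((m - l)/(y - l)) with hT
    have hT0 : 0 ≤ T := Real.log_nonneg ((one_le_div (by linarith)).2 (by linarith))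
    have hPy : P y = P m + ∫ z in m..y, β z :=
      (intervalIntegral.integral_add_adjacent_intervals (hβint c hc m hm) (hβint m hm y hyIoo)).symm
    have h1 : |∫ z in m..y, β z| ≤ (C' + T) / 2 := by
      rw [intervalIntegral.integral_symm, abs_neg]
      calc |∫ z in y..m, β z| ≤ ∫ z in y..m, |β z| :=
            intervalIntegral.abs_integral_le_integral_abs hy2.le
        _ = ∫ z in Ioc y m, |β z| := intervalIntegral.integral_of_le hy2.le
        _ ≤ (C' + T) / 2 := habs y hy1 hy2
    have h2 : g y ≤ Real.exp (|P m| + C'/2) * Real.exp (T/2) := by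
      rw [hgdef, ← Real.exp_add]
      apply Real.exp_le_exp.2
      have := (abs_le.1 h1).2
      have hPm := le_abs_self (P m)
      rw [hPy]; linarith
    have h3 : Real.exp (T/2) = Real.sqrt (m - l) * (y - l) ^ (-(1/2) : ℝ) := by
      have hpos : (0:ℝ) < (m - l)/(y - l) := div_pos (by linarith) (by linarith)
      have e1 : ((m - l)/(y - l)) ^ ((1:ℝ)/2) = Real.exp (T/2) := by
        rw [Real.rpow_def_of_pos hpos, hT]; ring_nf
      rw [← e1, Real.div_rpow (by linarith) (by linarith), div_eq_mul_inv,
        ← Real.rpow_neg (by linarith : (0:ℝ) ≤ y - l), Real.sqrt_eq_rpow]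
    calc g y ≤ Real.exp (|P m| + C'/2) * Real.exp (T/2) := h2
      _ = M * (y - l) ^ (-(1/2) : ℝ) := by rw [h3, hMdef]; ring
  -- integrability of g near l
  have hmaj : IntegrableOn (fun y : ℝ => M * (y - l) ^ (-(1/2):ℝ)) (Ioc l m) volume := by
    have h1 : IntervalIntegrable (fun u : ℝ => u ^ (-(1/2):ℝ)) volume 0 (m - l) :=
      intervalIntegral.intervalIntegrable_rpow' (by norm_num)
    have h2 : IntervalIntegrable (fun y : ℝ => (y - l) ^ (-(1/2):ℝ)) volume l m := by
      have := h1.comp_sub_right l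
      simpa using this
    exact (intervalIntegrable_iff_integrableOn_Ioc_of_le hlm.le).1 (h2.const_mul M)
  have hgIoc : IntegrableOn g (Ioc l m) volume := by
    rw [integrableOn_Ioc_iff_integrableOn_Ioo]
    refine Integrable.mono' (hmaj.mono_set Ioo_subset_Ioc_self)
      ((hgcont.mono (Ioo_subset_Ioo_right hm.2.le)).aestronglyMeasurable measurableSet_Ioo) ?_
    filter_upwards [ae_restrict_mem measurableSet_Ioo] with y hy
    rw [Real.norm_of_nonneg (Real.exp_pos _).le]
    exact gbound y hy.1 hy.2
  have h_cm : IntervalIntegrable g volume c m :=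
    (hgcont.mono (Set.ordConnected_Ioo.uIcc_subset hc hm)).intervalIntegrable
  set L : ℝ := (∫ y in c..m, g y) - ∫ y in Ioo l m, g y with hLdef
  -- key identity
  have key : ∀ x, l < x → x < m → (∫ y in c..x, g y) - L = ∫ y in Ioc l x, g y := by
    intro x hx1 hx2
    have hmx : IntervalIntegrable g volume m x := by
      rw [intervalIntegrable_iff, uIoc_comm, uIoc_of_le hx2.le]
      exact hgIoc.mono_set (Ioc_subset_Ioc_left hx1.le)
    have hadj : (∫ y in c..m, g y) + ∫ y in m..x, g y = ∫ y in c..x, g y :=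
      intervalIntegral.integral_add_adjacent_intervals h_cm hmx
    have hsplit : Ioc l x ∪ Ioo x m = Ioo l m := Ioc_union_Ioo_eq_Ioo hx1.le hx2
    have hdisj : Disjoint (Ioc l x) (Ioo x m) := by
      rw [Set.disjoint_left]
      rintro z ⟨_, hz2⟩ ⟨hz3, _⟩
      exact absurd hz3 (not_lt.2 hz2)
    have hunion : ∫ y in Ioo l m, g y = (∫ y in Ioc l x, g y) + ∫ y in Ioo x m, g y := by
      rw [← hsplit, setIntegral_union hdisj measurableSet_Ioo
        (hgIoc.mono_set (Ioc_subset_Ioc_right hx2.le))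
        (((integrableOn_Ioc_iff_integrableOn_Ioo enorm_ne_top).1 hgIoc).mono_set
          (Ioo_subset_Ioo_left hx1.le))]
    have hmx_val : ∫ y in m..x, g y = -(∫ y in Ioo x m, g y) := by
      rw [intervalIntegral.integral_symm, intervalIntegral.integral_of_le hx2.le,
        integral_Ioc_eq_integral_Ioo]
    rw [← hadj, hmx_val, hLdef, hunion]
    ring
  -- quantitative bound
  have bound2 : ∀ x, l < x → x < m →
      |(∫ y in c..x, g y) - L| ≤ M * (2 * Real.sqrt (x - l)) := by
    intro x hx1 hx2
    rw [key x hx1 hx2]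
    have hnn : 0 ≤ ∫ y in Ioc l x, g y :=
      setIntegral_nonneg measurableSet_Ioc fun y _ => (Real.exp_pos _).le
    rw [abs_of_nonneg hnn]
    have hstep : (∫ y in Ioc l x, g y) ≤ ∫ y in Ioc l x, M * (y - l) ^ (-(1/2):ℝ) := by
      refine setIntegral_mono_on (hgIoc.mono_set (Ioc_subset_Ioc_right hx2.le))
        (hmaj.mono_set (Ioc_subset_Ioc_right hx2.le)) measurableSet_Ioc fun y hy => ?_
      exact gbound y hy.1 (lt_of_le_of_lt hy.2 hx2)
    refine hstep.trans (le_of_eq ?_)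
    rw [← intervalIntegral.integral_of_le hx1.le, intervalIntegral.integral_const_mul,
      intervalIntegral.integral_comp_sub_right (fun u : ℝ => u ^ (-(1/2):ℝ)) l,
      sub_self, integral_rpow (Or.inl (by norm_num))]
    rw [Real.sqrt_eq_rpow]
    norm_num
    left
    ring
  -- conclusion
  refine ⟨L, ?_⟩
  have hev : ∀ᶠ x in 𝓝[Ioo l a] l, x ∈ Ioo l m := by
    have h1 : Iio m ∈ 𝓝[Ioo l a] l := nhdsWithin_le_nhds (Iio_mem_nhds hlm)
    filter_upwards [self_mem_nhdsWithin, h1] with x hx hx' using ⟨hx.1, hx'⟩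
  rw [tendsto_iff_dist_tendsto_zero]
  have hcont : Tendsto (fun x : ℝ => M * (2 * Real.sqrt (x - l))) (𝓝 l)
      (𝓝 (M * (2 * Real.sqrt (l - l)))) := by
    apply Tendsto.const_mul
    apply Tendsto.const_mul
    exact (Real.continuous_sqrt.comp (continuous_id.sub continuous_const)).tendsto l
  have htend : Tendsto (fun x : ℝ => M * (2 * Real.sqrt (x - l))) (𝓝[Ioo l a] l) (𝓝 0) := by
    have h0 : M * (2 * Real.sqrt (l - l)) = 0 := by simp
    rw [h0] at hcont
    exact hcont.mono_left nhdsWithin_le_nhds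
  refine squeeze_zero' (Eventually.of_forall fun x => dist_nonneg) ?_ htend
  filter_upwards [hev] with x hx
  rw [Real.dist_eq]
  exact bound2 x hx.1 hx.2

/-- Under Condition C (`s(x) = ∫_c^x exp(∫_c^y β) dy` with `β²` locally
integrable), for a finite boundary point `b ∈ {l, r}`, the conditions
(i.a) "`|b| < ∞` and `∫_B |x − b| β(x)² dx < ∞`" and
(i.b) "`|s(b)| = ∞` (and the other boundary satisfies (i.a))"
are mutually exclusive at `b`: it cannot happen that simultaneously
`∫_B |x − b| β(x)² dx < ∞` and `s` has no finite limit at `b` (i.e. `|s(b)| = ∞`). -/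
theorem stmt15 (l r c a b : ℝ) (hlr : l < r) (hc : c ∈ Ioo l r) (ha : a ∈ Ioo l r)
    (β : ℝ → ℝ) (hβ : Measurable β)
    (hloc : LocallyIntegrableOn (fun x => (β x) ^ 2) (Ioo l r) volume)
    (s : ℝ → ℝ)
    (hs : ∀ x ∈ Ioo l r, s x = ∫ y in c..x, Real.exp (∫ z in c..y, β z))
    (B : Set ℝ)
    (hB : (b = l ∧ B = Ioo l a) ∨ (b = r ∧ B = Ioo a r)) :
    ¬ ((∫⁻ x in B, ENNReal.ofReal (|x - b| * (β x) ^ 2) < ⊤) ∧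
        ¬ (∃ L : ℝ, Tendsto s (nhdsWithin b B) (nhds L))) := by
  rintro ⟨hfin, hnot⟩
  apply hnot
  rcases hB with ⟨hb, hBeq⟩ | ⟨hb, hBeq⟩
  · subst b; subst hBeq
    obtain ⟨L, hL⟩ := aux_left l r c a hc ha β hβ hloc hfin
    refine ⟨L, Tendsto.congr' ?_ hL⟩
    filter_upwards [self_mem_nhdsWithin] with x hx
    exact (hs x ⟨hx.1, hx.2.trans ha.2⟩).symm
  · subst b; subst hBeq
    set β' : ℝ → ℝ := fun z => -β (-z) with hβ'def
    have hβ' : Measurable β' := (hβ.comp measurable_neg).neg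
    have hnegmp : MeasurePreserving (fun x : ℝ => -x) volume volume :=
      Measure.measurePreserving_neg _
    have hnegemb : MeasurableEmbedding (fun x : ℝ => -x) :=
      (Homeomorph.neg ℝ).measurableEmbedding
    have hc' : -c ∈ Ioo (-r) (-l) := ⟨neg_lt_neg hc.2, neg_lt_neg hc.1⟩
    have ha' : -a ∈ Ioo (-r) (-l) := ⟨neg_lt_neg ha.2, neg_lt_neg ha.1⟩
    have hsq : ∀ x : ℝ, β' x ^ 2 = β (-x) ^ 2 := fun x => by
      simp [hβ'def]
    have hloc' : LocallyIntegrableOn (fun x => (β' x) ^ 2) (Ioo (-r) (-l)) volume := by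
      rw [locallyIntegrableOn_iff (isOpen_Ioo.isLocallyClosed)]
      intro k hks hkc
      have hnegk : IsCompact (-k) := hkc.neg
      have hsubk : -k ⊆ Ioo l r := by
        intro x hx
        have h1 : -x ∈ k := hx
        have h2 := hks h1
        exact ⟨by simpa using neg_lt_neg h2.2, by simpa using neg_lt_neg h2.1⟩
      have hint : IntegrableOn (fun x => β x ^ 2) (-k) volume :=
        hloc.integrableOn_compact_subset hsubk hnegk
      have h3 := (MeasurePreserving.integrableOn_comp_preimage hnegmp hnegemb
        (s := -k) (f := fun x => β x ^ 2)).2 hint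
      have h4 : (fun x : ℝ => -x) ⁻¹' (-k) = k := by
        ext x; simp [Set.mem_neg]
      rw [h4] at h3
      refine h3.congr_fun (fun x _ => ?_) (hkc.measurableSet)
      exact (hsq x).symm
    have hfin' : ∫⁻ x in Ioo (-r) (-a), ENNReal.ofReal (|x - (-r)| * (β' x) ^ 2) < ⊤ := by
      have hset : Ioo (-r) (-a) = (fun x : ℝ => -x) ⁻¹' (Ioo a r) := by
        ext x
        simp only [Set.mem_preimage, Set.mem_Ioo]
        constructor <;> (intro h; constructor <;> linarith [h.1, h.2])
      have hptw : ∀ x : ℝ, ENNReal.ofReal (|x - (-r)| * β' x ^ 2)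
          = (fun u => ENNReal.ofReal (|u - r| * β u ^ 2)) (-x) := by
        intro x
        simp only
        rw [hsq x, show |x - (-r)| = |(-x) - r| from by rw [← abs_neg]; ring_nf]
      have hchg := hnegmp.setLIntegral_comp_preimage_emb hnegemb
        (fun u => ENNReal.ofReal (|u - r| * β u ^ 2)) (Ioo a r)
      rw [← hset] at hchg
      calc ∫⁻ x in Ioo (-r) (-a), ENNReal.ofReal (|x - (-r)| * β' x ^ 2)
          = ∫⁻ x in Ioo (-r) (-a), (fun u => ENNReal.ofReal (|u - r| * β u ^ 2)) (-x) :=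
            lintegral_congr hptw
        _ = ∫⁻ u in Ioo a r, ENNReal.ofReal (|u - r| * β u ^ 2) := hchg
        _ < ⊤ := hfin
    obtain ⟨L, hL⟩ := aux_left (-r) (-l) (-c) (-a) hc' ha' β' hβ' hloc' hfin'
    refine ⟨-L, ?_⟩
    have hmap : Tendsto (fun x : ℝ => -x) (𝓝[Ioo a r] r) (𝓝[Ioo (-r) (-a)] (-r)) := by
      refine tendsto_nhdsWithin_of_tendsto_nhds_of_eventually_within _
        ((continuous_neg.tendsto r).mono_left nhdsWithin_le_nhds) ?_
      filter_upwards [self_mem_nhdsWithin] with x hx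
      exact ⟨neg_lt_neg hx.2, neg_lt_neg hx.1⟩
    have hcomp := (hL.comp hmap).neg
    refine Tendsto.congr' ?_ hcomp
    filter_upwards [self_mem_nhdsWithin] with x hx
    have hxIoo : x ∈ Ioo l r := ⟨ha.1.trans hx.1, hx.2⟩
    rw [hs x hxIoo]
    show -(∫ y in (-c)..(-x), Real.exp (∫ z in (-c)..y, β' z))
        = ∫ y in c..x, Real.exp (∫ z in c..y, β z)
    have inner : ∀ y : ℝ, (∫ z in (-c)..y, β' z) = ∫ z in c..(-y), β z := by
      intro y
      have h1 : (∫ z in (-c)..y, β' z) = -∫ z in (-c)..y, β (-z) := by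
        simp [hβ'def]
      rw [h1, intervalIntegral.integral_comp_neg (fun z => β z),
        intervalIntegral.integral_symm, neg_neg, neg_neg]
    have h2 : (fun y => Real.exp (∫ z in (-c)..y, β' z))
        = fun y => Real.exp (∫ z in c..(-y), β z) := funext fun y => by rw [inner y]
    rw [h2, intervalIntegral.integral_comp_neg (fun y => Real.exp (∫ z in c..y, β z)),
      intervalIntegral.integral_symm, neg_neg, neg_neg]
    simp only [neg_neg]
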